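/- Suppose the flexible Golub–Kahan relations AZ_k = Ũ_{k+1}P_k and AᵀŨ_{k+1} = W_{k+1}T_{k+1} hold, with W_{k+1} having orthonormal columns, b = β̃₁ũ₁, and Aᵀũ₁ = t_{1,1}w₁. Then for x = Z_k y, Aᵀ(b − Ax) = W_{k+1}(β̃₁t_{1,1}e₁ − T_{k+1}P_k y), and hence ‖Aᵀ(b − AZ_k y)‖₂ = ‖β̃₁t_{1,1}e₁ − T_{k+1}P_k y‖₂. -/

import Mathlib

open Matrix

/-- The Euclidean (ℓ₂) norm of a real vector. -/
noncomputable def enorm' {m : ℕ} (v : Fin m → ℝ) : ℝ := ‖(WithLp.equiv 2 (Fin m → ℝ)).symm v‖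

lemma enorm_eq_sqrt_dot {m : ℕ} (v : Fin m → ℝ) :
    enorm' v = Real.sqrt (v ⬝ᵥ v) := by
  rw [enorm', EuclideanSpace.norm_eq, dotProduct]
  congr 1
  refine Finset.sum_congr rfl fun i _ => ?_
  simp [sq_abs, sq]

lemma enorm_mulVec_of_orth {n m : ℕ} (W : Matrix (Fin n) (Fin m) ℝ)
    (hW : Wᵀ * W = 1) (v : Fin m → ℝ) : enorm' (W.mulVec v) = enorm' v := by
  rw [enorm_eq_sqrt_dot, enorm_eq_sqrt_dot]
  congr 1
  calc W.mulVec v ⬝ᵥ W.mulVec v = v ⬝ᵥ (Wᵀ * W).mulVec v := by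
        rw [← mulVec_mulVec, dotProduct_mulVec, ← mulVec_transpose, dotProduct_comm]
    _ = v ⬝ᵥ v := by rw [hW, one_mulVec]

/-- Under the flexible Golub–Kahan relations `AZ_k = Ũ_{k+1}P_k`,
`AᵀŨ_{k+1} = W_{k+1}T_{k+1}` with `W_{k+1}` orthonormal, `b = β̃₁ũ₁`,
`Aᵀũ₁ = t₁₁w₁`: for `x = Z_k y`,
`Aᵀ(b − Ax) = W_{k+1}(β̃₁t₁₁e₁ − T_{k+1}P_k y)` and the norms agree. -/
theorem stmt11 (m n k : ℕ)
    (A : Matrix (Fin m) (Fin n) ℝ) (b : Fin m → ℝ)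
    (Z : Matrix (Fin n) (Fin k) ℝ)
    (U : Matrix (Fin m) (Fin (k + 1)) ℝ)
    (W : Matrix (Fin n) (Fin (k + 1)) ℝ)
    (P : Matrix (Fin (k + 1)) (Fin k) ℝ)
    (T : Matrix (Fin (k + 1)) (Fin (k + 1)) ℝ)
    (hW : Wᵀ * W = 1)
    (h1 : A * Z = U * P)
    (h2 : Aᵀ * U = W * T)
    (βt1 : ℝ) (hβ : βt1 = enorm' b) (hb : b = βt1 • (fun i => U i 0))
    (hu1 : Aᵀ.mulVec (fun i => U i 0) = T 0 0 • (fun i => W i 0))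
    (y : Fin k → ℝ) :
    Aᵀ.mulVec (b - A.mulVec (Z.mulVec y)) =
        W.mulVec ((βt1 * T 0 0) • (Pi.single 0 (1 : ℝ) : Fin (k + 1) → ℝ) -
          (T * P).mulVec y) ∧
      enorm' (Aᵀ.mulVec (b - A.mulVec (Z.mulVec y))) =
        enorm' ((βt1 * T 0 0) • (Pi.single 0 (1 : ℝ) : Fin (k + 1) → ℝ) -
          (T * P).mulVec y) := by
  have hWe1 : W.mulVec (Pi.single 0 (1 : ℝ)) = fun i => W i 0 := by
    funext i
    simp [mulVec, dotProduct, Pi.single_apply, mul_ite]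
  have key : Aᵀ.mulVec (b - A.mulVec (Z.mulVec y)) =
      W.mulVec ((βt1 * T 0 0) • (Pi.single 0 (1 : ℝ) : Fin (k + 1) → ℝ) -
        (T * P).mulVec y) := by
    rw [mulVec_sub, mulVec_sub, mulVec_smul, hWe1]
    congr 1
    · rw [hb, mulVec_smul, hu1, smul_smul]
    · rw [mulVec_mulVec y A Z, h1, mulVec_mulVec, mulVec_mulVec, ← Matrix.mul_assoc, h2,
        Matrix.mul_assoc]
  exact ⟨key, by rw [key, enorm_mulVec_of_orth W hW]⟩
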